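/- Let K be an N×N Hermitian matrix and Φ an N×k matrix with linearly independent columns. Let P = Φ(Φ*Φ)^{-1}Φ* be the orthogonal projection onto the range of Φ and P⊥ = I − P. Suppose a ∈ C^N satisfies P⊥a = a and there exists c ∈ C^k with Ka + Φc = y and Φ*a = 0. If ϑ := min{⟨P⊥KP⊥x, x⟩ : ‖P⊥x‖ = 1} > 0, then ‖a‖₂ ≤ ϑ^{-1}‖y‖₂. -/

import Mathlib

open Matrix

noncomputable def evNorm {N : ℕ} (v : Fin N → ℂ) : ℝ :=
  Real.sqrt (∑ i, ‖v i‖ ^ 2)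

lemma evNorm_eq_norm {N : ℕ} (v : Fin N → ℂ) :
    evNorm v = ‖(WithLp.equiv 2 (Fin N → ℂ)).symm v‖ := by
  rw [EuclideanSpace.norm_eq]; rfl

lemma evNorm_nonneg {N : ℕ} (v : Fin N → ℂ) : 0 ≤ evNorm v :=
  Real.sqrt_nonneg _

lemma evNorm_smul {N : ℕ} (r : ℝ) (v : Fin N → ℂ) :
    evNorm ((r : ℂ) • v) = |r| * evNorm v := by
  rw [evNorm_eq_norm, evNorm_eq_norm]
  have : (WithLp.equiv 2 (Fin N → ℂ)).symm ((r : ℂ) • v)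
      = (r : ℂ) • (WithLp.equiv 2 (Fin N → ℂ)).symm v := rfl
  rw [this, norm_smul]
  simp

lemma cauchy_schwarz {N : ℕ} (u v : Fin N → ℂ) :
    (star u ⬝ᵥ v).re ≤ evNorm u * evNorm v := by
  have h1 : star u ⬝ᵥ v =
      inner ℂ ((WithLp.equiv 2 (Fin N → ℂ)).symm u) ((WithLp.equiv 2 (Fin N → ℂ)).symm v) := by
    simp [dotProduct, PiLp.inner_apply, RCLike.inner_apply, mul_comm]
  calc (star u ⬝ᵥ v).re ≤ ‖star u ⬝ᵥ v‖ := Complex.re_le_norm _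
    _ ≤ evNorm u * evNorm v := by
        rw [h1, evNorm_eq_norm, evNorm_eq_norm]
        exact norm_inner_le_norm _ _

/-- stability bound on the kernel coefficients `a`. -/
theorem stmt0 {N k : ℕ} (K : Matrix (Fin N) (Fin N) ℂ) (hK : K.IsHermitian)
    (Φ : Matrix (Fin N) (Fin k) ℂ)
    (hΦ : LinearIndependent ℂ (fun j => fun i => Φ i j))
    (P : Matrix (Fin N) (Fin N) ℂ)
    (hP : P = Φ * (Φᴴ * Φ)⁻¹ * Φᴴ)
    (Pperp : Matrix (Fin N) (Fin N) ℂ) (hPperp : Pperp = 1 - P)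
    (a y : Fin N → ℂ) (c : Fin k → ℂ)
    (ha : Pperp *ᵥ a = a)
    (hsys : K *ᵥ a + Φ *ᵥ c = y)
    (hconstr : Φᴴ *ᵥ a = 0)
    (ϑ : ℝ) (hϑpos : 0 < ϑ)
    (hϑ : ∀ x : Fin N → ℂ, evNorm (Pperp *ᵥ x) = 1 →
      ϑ ≤ (star x ⬝ᵥ (Pperp *ᵥ (K *ᵥ (Pperp *ᵥ x)))).re) :
    evNorm a ≤ ϑ⁻¹ * evNorm y := by
  -- Pperp is Hermitian
  have hPherm : Pᴴ = P := by
    subst hP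
    rw [conjTranspose_mul, conjTranspose_mul, conjTranspose_nonsing_inv,
      conjTranspose_mul, conjTranspose_conjTranspose]
    exact (Matrix.mul_assoc _ _ _).symm
  have hPPherm : Pperpᴴ = Pperp := by
    subst hPperp; rw [conjTranspose_sub, hPherm, conjTranspose_one]
  -- star a absorbed by Pperp
  have habs : ∀ v : Fin N → ℂ, star a ⬝ᵥ (Pperp *ᵥ v) = star a ⬝ᵥ v := by
    intro v
    rw [Matrix.dotProduct_mulVec]
    have : star a ᵥ* Pperp = star a := by
      have := congrArg star ha
      rw [Matrix.star_mulVec, hPPherm] at this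
      exact this
    rw [this]
  -- orthogonality to range of Φ
  have horth : star a ⬝ᵥ (Φ *ᵥ c) = 0 := by
    rw [Matrix.dotProduct_mulVec]
    have : star a ᵥ* Φ = 0 := by
      have := congrArg star hconstr
      rw [Matrix.star_mulVec, conjTranspose_conjTranspose] at this
      simpa using this
    rw [this, zero_dotProduct]
  set t := evNorm a with ht
  have htnn : 0 ≤ t := evNorm_nonneg a
  rcases eq_or_lt_of_le htnn with h0 | htpos
  · rw [← h0]
    exact mul_nonneg (inv_nonneg.mpr hϑpos.le) (evNorm_nonneg y)
  -- main case
  · set x : Fin N → ℂ := ((t⁻¹ : ℝ) : ℂ) • a with hx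
    have hPx : Pperp *ᵥ x = x := by
      rw [hx, Matrix.mulVec_smul, ha]
    have hnx : evNorm (Pperp *ᵥ x) = 1 := by
      rw [hPx, hx, evNorm_smul, abs_of_pos (inv_pos.mpr htpos), ← ht]
      field_simp
    have hkey := hϑ x hnx
    rw [hPx] at hkey
    have hsx : star x = ((t⁻¹ : ℝ) : ℂ) • star a := by
      rw [hx, star_smul]
      congr 1
      simp [RingHom.id_apply]
    have hdot : star x ⬝ᵥ (Pperp *ᵥ (K *ᵥ x))
        = ((t⁻¹ : ℝ) : ℂ) * (((t⁻¹ : ℝ) : ℂ) * (star a ⬝ᵥ (K *ᵥ a))) := by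
      rw [hsx, hx, Matrix.mulVec_smul, Matrix.mulVec_smul, smul_dotProduct,
        dotProduct_smul, habs]
      simp [smul_eq_mul]
    rw [hdot] at hkey
    have hre : (((t⁻¹ : ℝ) : ℂ) * (((t⁻¹ : ℝ) : ℂ) * (star a ⬝ᵥ (K *ᵥ a)))).re
        = t⁻¹ * (t⁻¹ * (star a ⬝ᵥ (K *ᵥ a)).re) := by
      simp [Complex.mul_re]
    rw [hre] at hkey
    -- so ϑ * t^2 ≤ Re (a* K a)
    have h1 : ϑ * t ^ 2 ≤ (star a ⬝ᵥ (K *ᵥ a)).re := by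
      have ht2 : t⁻¹ * (t⁻¹ * (star a ⬝ᵥ (K *ᵥ a)).re) * t ^ 2
          = (star a ⬝ᵥ (K *ᵥ a)).re := by
        rw [pow_two]
        field_simp
      calc ϑ * t ^ 2 ≤ t⁻¹ * (t⁻¹ * (star a ⬝ᵥ (K *ᵥ a)).re) * t ^ 2 := by
            apply mul_le_mul_of_nonneg_right hkey (by positivity)
        _ = _ := ht2
    -- Re (a* K a) = Re (a* y)
    have hKa : K *ᵥ a = y - Φ *ᵥ c := by
      rw [← hsys]; ring
    have h2 : (star a ⬝ᵥ (K *ᵥ a)).re = (star a ⬝ᵥ y).re := by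
      rw [hKa, dotProduct_sub, horth, sub_zero]
    have h3 : ϑ * t ^ 2 ≤ t * evNorm y := by
      calc ϑ * t ^ 2 ≤ (star a ⬝ᵥ y).re := h2 ▸ h1
        _ ≤ evNorm a * evNorm y := cauchy_schwarz a y
        _ = t * evNorm y := by rw [← ht]
    have h4 : ϑ * t ≤ evNorm y := by nlinarith [h3, htpos]
    calc t = ϑ⁻¹ * (ϑ * t) := by field_simp
      _ ≤ ϑ⁻¹ * evNorm y :=
        mul_le_mul_of_nonneg_left h4 (inv_nonneg.mpr hϑpos.le)
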